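/- Let x ∈ (Ω⊠Ω)²(−1) satisfy ∂(x) = c⊠c − a⊠a, and define ω = e⊠e + Σ_{k≥1} x^{⋄k} in the completed algebra. Then ω is a Maurer-Cartan element of the completed DGA associated to Ω⊠Ω: writing ω_k for the k-th component (ω_1 = e⊠e, ω_k = x^{⋄(k−1)} for k ≥ 2), one has ∂(x^{⋄(k−1)}) = Σ_{i=1}^{k−1} (−1)^{i+1} ( x^{⋄(i−1)} ∘ x^{⋄(k−i−1)} − d_i(x^{⋄(k−2)}) ) for all k ≥ 2, where y ∘ z = y ⋄ (c⊠c) ⋄ z and d_i inserts a⊠a at position i. -/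

import Mathlib

/-
STATEMENT 12: Let x be an element of (Ω⊠Ω)²(−1) (span of letter pairs with exactly one b)
with ∂x = c⊠c − a⊠a.  Then ω = e⊠e + Σ_{k≥1} x^{⋄k} is a Maurer-Cartan element of the
completed DGA of Ω⊠Ω; componentwise, for all k ≥ 2,
  ∂(x^{⋄(k−1)}) = Σ_{i=1}^{k−1} (−1)^{i+1} ( x^{⋄(i−1)} ∘ x^{⋄(k−i−1)} − d_i(x^{⋄(k−2)}) ),
where y ∘ z = y ⋄ (c⊠c) ⋄ z and d_i(x^{⋄(k−2)}) = x^{⋄(i−1)} ⋄ (a⊠a) ⋄ x^{⋄(k−i−1)}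
(insertion of a⊠a at position i).  Here ⋄ is the componentwise concatenation with
Koszul sign (x₁⊠y₁)⋄(x₂⊠y₂) = (−1)^{l(y₁)l(x₂)} (x₁x₂)⊠(y₁y₂) and the differential on
Ω⊠Ω is the Leibniz extension (with Koszul signs) of ∂b = c−a, ∂a = ∂c = 0 in each factor.
-/

noncomputable section

abbrev Word := FreeMonoid (Fin 3)
abbrev P2 : Type := (Word × Word) →₀ ℝ

def W2 (w w' : Word) : P2 := Finsupp.single (w, w') 1

def aW : Word := FreeMonoid.of 0
def bW : Word := FreeMonoid.of 1
def cW : Word := FreeMonoid.of 2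

def bcount (w : Word) : ℕ := (FreeMonoid.toList w).count 1

/-- the product ⋄ of Ω⊠Ω : componentwise concatenation with Koszul sign. -/
def tmul (f g : P2) : P2 :=
  f.sum fun p r => g.sum fun q s =>
    Finsupp.single (p.1 * q.1, p.2 * q.2)
      (r * s * ((-1 : ℝ) ^ (bcount p.2 * bcount q.1)))

/-- iterated ⋄-powers: tpow x k = x^{⋄k}, with x^{⋄0} = e⊠e. -/
def tpow (x : P2) : ℕ → P2
  | 0 => W2 1 1
  | k + 1 => tmul x (tpow x k)

/-- pairs of single letters with exactly one b (the bidegree (2,−1) part of Ω⊠Ω). -/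
def Deg2m1 : Submodule ℝ P2 :=
  Submodule.span ℝ ({W2 bW aW, W2 bW cW, W2 aW bW, W2 cW bW} : Set P2)

def TB : P2 →ₗ[ℝ] P2 →ₗ[ℝ] P2 :=
  Finsupp.lsum ℝ fun p => LinearMap.toSpanSingleton ℝ _
    (Finsupp.lsum ℝ fun q => LinearMap.toSpanSingleton ℝ P2
      (Finsupp.single (p.1 * q.1, p.2 * q.2) ((-1 : ℝ) ^ (bcount p.2 * bcount q.1))))

lemma tmul_eq (f g : P2) : tmul f g = TB f g := by
  rw [tmul, TB]
  rw [Finsupp.lsum_apply]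
  rw [Finsupp.sum, Finsupp.sum, LinearMap.sum_apply]
  apply Finset.sum_congr rfl
  intro p _
  rw [LinearMap.toSpanSingleton_apply, LinearMap.smul_apply, Finsupp.lsum_apply,
    Finsupp.smul_sum]
  apply Finsupp.sum_congr
  intro q _
  rw [LinearMap.toSpanSingleton_apply, Finsupp.smul_single, Finsupp.smul_single,
    smul_eq_mul, smul_eq_mul, mul_assoc]

lemma tmul_single_single (p q : Word × Word) (r s : ℝ) :
    tmul (Finsupp.single p r) (Finsupp.single q s)
      = Finsupp.single (p.1 * q.1, p.2 * q.2)
          (r * s * ((-1 : ℝ) ^ (bcount p.2 * bcount q.1))) := by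
  rw [tmul]
  rw [Finsupp.sum_single_index (by simp [Finsupp.sum_single_index])]
  rw [Finsupp.sum_single_index (by simp)]

lemma tmul_zero_left (g : P2) : tmul 0 g = 0 := by simp [tmul_eq]
lemma tmul_zero_right (f : P2) : tmul f 0 = 0 := by simp [tmul_eq]
lemma tmul_add_left (f f' g : P2) : tmul (f + f') g = tmul f g + tmul f' g := by
  simp [tmul_eq]
lemma tmul_add_right (f g g' : P2) : tmul f (g + g') = tmul f g + tmul f g' := by
  simp [tmul_eq]
lemma tmul_sub_left (f f' g : P2) : tmul (f - f') g = tmul f g - tmul f' g := by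
  simp [tmul_eq]
lemma tmul_sub_right (f g g' : P2) : tmul f (g - g') = tmul f g - tmul f g' := by
  simp [tmul_eq]
lemma tmul_smul_left (c : ℝ) (f g : P2) : tmul (c • f) g = c • tmul f g := by
  simp [tmul_eq]
lemma tmul_smul_right (c : ℝ) (f g : P2) : tmul f (c • g) = c • tmul f g := by
  simp [tmul_eq]
lemma tmul_sum_right {ι : Type*} (s : Finset ι) (f : P2) (g : ι → P2) :
    tmul f (∑ i ∈ s, g i) = ∑ i ∈ s, tmul f (g i) := by
  simp [tmul_eq]

lemma bcount_one : bcount 1 = 0 := by simp [bcount]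
lemma bcount_mul (u v : Word) : bcount (u * v) = bcount u + bcount v := by
  simp [bcount, List.count_append]

lemma one_tmul (z : P2) : tmul (W2 1 1) z = z := by
  induction z using Finsupp.induction with
  | zero => exact tmul_zero_right _
  | single_add q s f hq hs ih =>
    rw [tmul_add_right, ih, W2, tmul_single_single]
    simp [bcount_one]

lemma tmul_one (z : P2) : tmul z (W2 1 1) = z := by
  induction z using Finsupp.induction with
  | zero => exact tmul_zero_left _
  | single_add q s f hq hs ih =>
    rw [tmul_add_left, ih, W2, tmul_single_single]
    simp [bcount_one]

lemma tmul_assoc (f g h : P2) : tmul (tmul f g) h = tmul f (tmul g h) := by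
  induction f using Finsupp.induction with
  | zero => simp [tmul_zero_left]
  | single_add p r f hp hr ihf =>
    simp only [tmul_add_left, tmul_add_right, ihf]
    congr 1
    clear ihf hr hp f
    induction g using Finsupp.induction with
    | zero => simp [tmul_zero_left, tmul_zero_right]
    | single_add q s g hq hs ihg =>
      simp only [tmul_add_left, tmul_add_right, ihg]
      congr 1
      clear ihg hs hq g
      induction h using Finsupp.induction with
      | zero => simp [tmul_zero_right]
      | single_add u t h hu ht ihh =>
        simp only [tmul_add_left, tmul_add_right, ihh]
        congr 1
        rw [tmul_single_single, tmul_single_single, tmul_single_single, tmul_single_single]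
        simp only [bcount_mul, mul_assoc]
        congr 1
        simp only [Nat.add_mul, Nat.mul_add, pow_add]
        ring

lemma tmulDerivSingle (D2 : P2 →ₗ[ℝ] P2)
    (hleib : ∀ p q : Word × Word,
      D2 (tmul (Finsupp.single p 1) (Finsupp.single q 1))
        = tmul (D2 (Finsupp.single p 1)) (Finsupp.single q 1)
          + ((-1 : ℝ) ^ (bcount p.1 + bcount p.2)) •
              tmul (Finsupp.single p 1) (D2 (Finsupp.single q 1)))
    (p : Word × Word) (hp : bcount p.1 + bcount p.2 = 1) (z : P2) :
    D2 (tmul (Finsupp.single p 1) z)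
      = tmul (D2 (Finsupp.single p 1)) z - tmul (Finsupp.single p 1) (D2 z) := by
  induction z using Finsupp.induction with
  | zero => simp [tmul_zero_right]
  | single_add q s f hq hs ih =>
    have hq1 : (Finsupp.single q s : P2) = s • Finsupp.single q 1 := by
      rw [Finsupp.smul_single, smul_eq_mul, mul_one]
    rw [tmul_add_right, map_add, ih, hq1, tmul_smul_right, map_smul, hleib p q, hp,
      map_add, map_smul, tmul_add_right, tmul_smul_right, tmul_add_right, tmul_smul_right]
    simp only [pow_one, neg_smul, one_smul, smul_add, smul_sub, smul_neg]
    abel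

lemma tmulDerivX (D2 : P2 →ₗ[ℝ] P2)
    (hleib : ∀ p q : Word × Word,
      D2 (tmul (Finsupp.single p 1) (Finsupp.single q 1))
        = tmul (D2 (Finsupp.single p 1)) (Finsupp.single q 1)
          + ((-1 : ℝ) ^ (bcount p.1 + bcount p.2)) •
              tmul (Finsupp.single p 1) (D2 (Finsupp.single q 1)))
    (x : P2) (hx : x ∈ Deg2m1) (z : P2) :
    D2 (tmul x z) = tmul (D2 x) z - tmul x (D2 z) := by
  induction hx using Submodule.span_induction generalizing z with
  | mem y hy =>
    have hb : bcount bW = 1 := by simp [bcount, bW]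
    have ha' : bcount aW = 0 := by simp [bcount, aW]
    have hc' : bcount cW = 0 := by simp [bcount, cW]
    rcases hy with h | h | h | h
    · exact h ▸ tmulDerivSingle D2 hleib (bW, aW) (by simp [hb, ha']) z
    · exact h ▸ tmulDerivSingle D2 hleib (bW, cW) (by simp [hb, hc']) z
    · exact h ▸ tmulDerivSingle D2 hleib (aW, bW) (by simp [hb, ha']) z
    · exact h ▸ tmulDerivSingle D2 hleib (cW, bW) (by simp [hb, hc']) z
  | zero => simp [tmul_zero_left]
  | add y y' _ _ ihy ihy' =>
    rw [tmul_add_left, map_add, ihy, ihy', map_add, tmul_add_left, tmul_add_left]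
    abel
  | smul c y _ ihy =>
    rw [tmul_smul_left, map_smul, ihy, map_smul, tmul_smul_left, tmul_smul_left, smul_sub]

lemma main_lemma (D2 : P2 →ₗ[ℝ] P2) (hunit : D2 (W2 1 1) = 0) (x : P2)
    (hd : ∀ z, D2 (tmul x z) = tmul (D2 x) z - tmul x (D2 z))
    (hxd : D2 x = W2 cW cW - W2 aW aW) :
    ∀ n : ℕ, D2 (tpow x n)
      = ∑ j ∈ Finset.range n, ((-1 : ℝ) ^ j) •
          (tmul (tpow x j) (tmul (W2 cW cW) (tpow x (n - 1 - j)))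
            - tmul (tpow x j) (tmul (W2 aW aW) (tpow x (n - 1 - j)))) := by
  intro n
  induction n with
  | zero => simpa [tpow] using hunit
  | succ n ih =>
    rw [show tpow x (n+1) = tmul x (tpow x n) from rfl, hd, ih, Finset.sum_range_succ']
    have key : ∀ j ∈ Finset.range n,
        ((-1 : ℝ) ^ (j+1)) •
          (tmul (tpow x (j+1)) (tmul (W2 cW cW) (tpow x (n + 1 - 1 - (j+1))))
            - tmul (tpow x (j+1)) (tmul (W2 aW aW) (tpow x (n + 1 - 1 - (j+1)))))
        = -(tmul x (((-1 : ℝ) ^ j) •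
            (tmul (tpow x j) (tmul (W2 cW cW) (tpow x (n - 1 - j)))
              - tmul (tpow x j) (tmul (W2 aW aW) (tpow x (n - 1 - j)))))) := by
      intro j _
      rw [show n + 1 - 1 - (j+1) = n - 1 - j by omega,
        show tpow x (j+1) = tmul x (tpow x j) from rfl,
        tmul_assoc, tmul_assoc, tmul_smul_right, tmul_sub_right, pow_succ]
      rw [show ((-1:ℝ)^j * -1) = -((-1:ℝ)^j) by ring, neg_smul]
    rw [Finset.sum_congr rfl key, tmul_sum_right, hxd, tmul_sub_left,
      show n + 1 - 1 - 0 = n by omega]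
    simp only [pow_zero, one_smul, show tpow x 0 = W2 1 1 from rfl, one_tmul,
      Finset.sum_neg_distrib]
    abel

theorem stmt12
    -- ∂ on Ω⊠Ω: a derivation for ⋄ with the Koszul sign, with the standard values
    -- on the generators a⊠e, c⊠e, b⊠e, e⊠a, e⊠c, e⊠b and on the unit e⊠e:
    (D2 : P2 →ₗ[ℝ] P2)
    (hunit : D2 (W2 1 1) = 0)
    (haL : D2 (W2 aW 1) = 0) (hcL : D2 (W2 cW 1) = 0)
    (hbL : D2 (W2 bW 1) = W2 cW 1 - W2 aW 1)
    (haR : D2 (W2 1 aW) = 0) (hcR : D2 (W2 1 cW) = 0)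
    (hbR : D2 (W2 1 bW) = W2 1 cW - W2 1 aW)
    (hleib : ∀ p q : Word × Word,
      D2 (tmul (Finsupp.single p 1) (Finsupp.single q 1))
        = tmul (D2 (Finsupp.single p 1)) (Finsupp.single q 1)
          + ((-1 : ℝ) ^ (bcount p.1 + bcount p.2)) •
              tmul (Finsupp.single p 1) (D2 (Finsupp.single q 1)))
    -- the element x of bidegree (2,−1) with ∂x = c⊠c − a⊠a:
    (x : P2) (hx : x ∈ Deg2m1) (hxd : D2 x = W2 cW cW - W2 aW aW) :
    ∀ k : ℕ, 2 ≤ k →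
      D2 (tpow x (k - 1))
        = ∑ i ∈ Finset.Ico 1 k, ((-1 : ℝ) ^ (i + 1)) •
            (tmul (tpow x (i - 1)) (tmul (W2 cW cW) (tpow x (k - 1 - i)))
              - tmul (tpow x (i - 1)) (tmul (W2 aW aW) (tpow x (k - 1 - i)))) := by
  intro k hk
  have hd : ∀ z, D2 (tmul x z) = tmul (D2 x) z - tmul x (D2 z) :=
    fun z => tmulDerivX D2 hleib x hx z
  rw [main_lemma D2 hunit x hd hxd (k - 1), Finset.sum_Ico_eq_sum_range]
  apply Finset.sum_congr rfl
  intro j hj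
  rw [show (1 + j) - 1 = j by omega, show k - 1 - (1 + j) = (k - 1) - 1 - j by omega,
    show ((-1 : ℝ)) ^ (1 + j + 1) = (-1) ^ j by
      rw [show 1 + j + 1 = j + 2 by ring, pow_add]; norm_num]


end
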